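/- Let S be a factorial set of words over an alphabet A with k+1 = Card(S ∩ A). If S is neutral, then its complexity satisfies Card(S ∩ A^n) = kn + 1 for all n ≥ 0. -/

import Mathlib

namespace Paper

variable {A : Type*}

/-- A set of words is factorial if it contains all factors of its elements. -/
def Factorial (S : Set (List A)) : Prop := ∀ w ∈ S, ∀ u : List A, u <:+: w → u ∈ S

def Lext (S : Set (List A)) (w : List A) : Set A := {a | a :: w ∈ S}
def Rext (S : Set (List A)) (w : List A) : Set A := {a | w ++ [a] ∈ S}
def Eext (S : Set (List A)) (w : List A) : Set (A × A) := {p | p.1 :: (w ++ [p.2]) ∈ S}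

def ExtVertex (S : Set (List A)) (w : List A) :=
  {v : A ⊕ A // Sum.elim (fun a => a ∈ Lext S w) (fun b => b ∈ Rext S w) v}

/-- The extension graph of `w` in `S`. -/
def extGraph (S : Set (List A)) (w : List A) : SimpleGraph (ExtVertex S w) where
  Adj u v := (∃ a b, u.1 = Sum.inl a ∧ v.1 = Sum.inr b ∧ (a, b) ∈ Eext S w) ∨
             (∃ a b, u.1 = Sum.inr b ∧ v.1 = Sum.inl a ∧ (a, b) ∈ Eext S w)
  symm := by
    refine ⟨?_⟩
    rintro u v (⟨a, b, h1, h2, h3⟩ | ⟨a, b, h1, h2, h3⟩)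
    · exact Or.inr ⟨a, b, h2, h1, h3⟩
    · exact Or.inl ⟨a, b, h2, h1, h3⟩
  loopless := by
    refine ⟨?_⟩
    rintro u (⟨a, b, h1, h2, _⟩ | ⟨a, b, h1, h2, _⟩) <;> rw [h1] at h2 <;> simp at h2

def IsPrefixCode (X : Set (List A)) : Prop :=
  (∀ x ∈ X, x ≠ []) ∧ ∀ x ∈ X, ∀ y ∈ X, x <+: y → x = y

def IsSuffixCode (X : Set (List A)) : Prop :=
  (∀ x ∈ X, x ≠ []) ∧ ∀ x ∈ X, ∀ y ∈ X, x <:+ y → x = y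

def IsBifixCode (X : Set (List A)) : Prop := IsPrefixCode X ∧ IsSuffixCode X

/-- The submonoid `X*` generated by a set of words. -/
def starOf (X : Set (List A)) : Set (List A) :=
  {m | ∃ ls : List (List A), (∀ u ∈ ls, u ∈ X) ∧ m = ls.flatten}

/-- A parse of `w` with respect to `X` : `w = v ++ x ++ u`, `v` has no suffix in `X`,
`x ∈ X*`, `u` has no prefix in `X`. -/
def IsParse (X : Set (List A)) (w : List A) (p : List A × List A × List A) : Prop :=
  w = p.1 ++ p.2.1 ++ p.2.2 ∧ (∀ s, s <:+ p.1 → s ∉ X) ∧ p.2.1 ∈ starOf X ∧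
    (∀ t, t <+: p.2.2 → t ∉ X)

noncomputable def parseCount (X : Set (List A)) (w : List A) : ℕ :=
  {p : List A × List A × List A | IsParse X w p}.ncard

/-- `X` has `S`-degree `d`. -/
def SDegreeIs (S X : Set (List A)) (d : ℕ) : Prop :=
  (∀ w ∈ S, parseCount X w ≤ d) ∧ ∃ w ∈ S, parseCount X w = d

def IsSMaximalBifixCode (S X : Set (List A)) : Prop :=
  IsBifixCode X ∧ X ⊆ S ∧ ∀ Y : Set (List A), IsBifixCode Y → Y ⊆ S → X ⊆ Y → Y = X

def Recurrent (S : Set (List A)) : Prop :=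
  Factorial S ∧ S ≠ {[]} ∧ S.Nonempty ∧ ∀ u ∈ S, ∀ w ∈ S, ∃ v, u ++ v ++ w ∈ S

def UniformlyRecurrent (S : Set (List A)) : Prop :=
  Factorial S ∧ (∀ w ∈ S, ∃ a : A, w ++ [a] ∈ S) ∧
    ∀ u ∈ S, ∃ n : ℕ, ∀ w ∈ S, w.length = n → u <:+: w

/-- The element of the free group corresponding to a word. -/
def toFG (w : List A) : FreeGroup A := (w.map FreeGroup.of).prod

/-- `T` is a basis of the subgroup `H` of the free group on `A`. -/
def IsBasisOf (T : Set (FreeGroup A)) (H : Subgroup (FreeGroup A)) : Prop :=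
  Function.Injective (FreeGroup.lift (Subtype.val : T → FreeGroup A)) ∧
  (FreeGroup.lift (Subtype.val : T → FreeGroup A)).range = H


/-- A neutral factorial set over `k + 1` letters has complexity
`p n = k * n + 1`. -/
theorem neutral_complexity {A : Type*} [Fintype A] (S : Set (List A)) (k : ℕ)
    (hfac : Factorial S) (hk : {a : A | [a] ∈ S}.ncard = k + 1)
    (hneutral : ∀ w ∈ S,
      ((Eext S w).ncard : ℤ) = (Lext S w).ncard + (Rext S w).ncard - 1) :
    ∀ n : ℕ, {w ∈ S | w.length = n}.ncard = k * n + 1 := by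
  classical
  have hfin : ∀ n : ℕ, {w ∈ S | w.length = n}.Finite := fun n =>
    (List.finite_length_eq A n).subset (fun w hw => hw.2)
  set F : ℕ → Finset (List A) := fun n => (hfin n).toFinset with hF
  have hmemF : ∀ (n : ℕ) (w : List A), w ∈ F n ↔ w ∈ S ∧ w.length = n := by
    intro n w; simp [hF]
  -- S contains the empty word
  have hS1 : {a : A | [a] ∈ S}.Nonempty := by
    apply Set.nonempty_of_ncard_ne_zero; omega
  obtain ⟨a0, ha0⟩ := hS1
  have hnil : ([] : List A) ∈ S := hfac [a0] ha0 [] List.nil_infix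
  -- Finsets of extensions
  set RF : List A → Finset A := fun w => (Set.toFinite (Rext S w)).toFinset with hRF
  set LF : List A → Finset A := fun w => (Set.toFinite (Lext S w)).toFinset with hLF
  set EF : List A → Finset (A × A) := fun w => (Set.toFinite (Eext S w)).toFinset with hEF
  -- right extension decomposition
  have hR : ∀ n : ℕ, F (n+1) = (F n).biUnion (fun w => (RF w).image (fun a => w ++ [a])) := by
    intro n
    ext u
    simp only [Finset.mem_biUnion, Finset.mem_image, hmemF, hRF, Set.Finite.mem_toFinset]
    constructor
    · rintro ⟨hu, hlen⟩
      have hne : u ≠ [] := by intro h; simp [h] at hlen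
      refine ⟨u.dropLast, ⟨hfac u hu _ (List.dropLast_prefix u).isInfix, by
        simp [hlen]⟩, u.getLast hne, ?_, List.dropLast_append_getLast hne⟩
      show u.dropLast ++ [u.getLast hne] ∈ S
      rw [List.dropLast_append_getLast hne]; exact hu
    · rintro ⟨w, ⟨hw, hwlen⟩, a, ha, rfl⟩
      exact ⟨ha, by simp [hwlen]⟩
  -- left extension decomposition
  have hL : ∀ n : ℕ, F (n+1) = (F n).biUnion (fun w => (LF w).image (fun a => a :: w)) := by
    intro n
    ext u
    simp only [Finset.mem_biUnion, Finset.mem_image, hmemF, hLF, Set.Finite.mem_toFinset]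
    constructor
    · rintro ⟨hu, hlen⟩
      obtain ⟨a, w, rfl⟩ : ∃ a w, u = a :: w := by
        cases u with
        | nil => simp at hlen
        | cons a w => exact ⟨a, w, rfl⟩
      exact ⟨w, ⟨hfac _ hu w (List.suffix_cons a w).isInfix, by simpa using hlen⟩, a, hu, rfl⟩
    · rintro ⟨w, ⟨hw, hwlen⟩, a, ha, rfl⟩
      exact ⟨ha, by simp [hwlen]⟩
  -- both-sided extension decomposition
  have hE : ∀ n : ℕ, F (n+2) = (F n).biUnion
      (fun w => (EF w).image (fun p => p.1 :: (w ++ [p.2]))) := by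
    intro n
    ext u
    simp only [Finset.mem_biUnion, Finset.mem_image, hmemF, hEF, Set.Finite.mem_toFinset]
    constructor
    · rintro ⟨hu, hlen⟩
      obtain ⟨a, v, rfl⟩ : ∃ a v, u = a :: v := by
        cases u with
        | nil => simp at hlen
        | cons a v => exact ⟨a, v, rfl⟩
      have hvne : v ≠ [] := by intro h; simp [h] at hlen
      have hvdec := List.dropLast_append_getLast hvne
      refine ⟨v.dropLast, ⟨hfac _ hu _ ⟨[a], [v.getLast hvne], by simp [hvdec]⟩, by
        simp at hlen ⊢; omega⟩, (a, v.getLast hvne), ?_, by simp [hvdec]⟩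
      show a :: (v.dropLast ++ [v.getLast hvne]) ∈ S
      rw [hvdec]; exact hu
    · rintro ⟨w, ⟨hw, hwlen⟩, ⟨a, b⟩, hab, rfl⟩
      exact ⟨hab, by simp [hwlen]⟩
  -- disjointness helpers and card computations
  have cardR : ∀ n : ℕ, (F (n+1)).card = ∑ w ∈ F n, (RF w).card := by
    intro n
    rw [hR n, Finset.card_biUnion]
    · exact Finset.sum_congr rfl (fun w _ =>
        Finset.card_image_of_injective _ (fun a b h => by simpa using h))
    · intro w1 h1 w2 h2 hne
      simp only [Finset.disjoint_left, Finset.mem_image]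
      rintro u ⟨a, _, rfl⟩ ⟨b, _, hb⟩
      exact hne ((List.append_inj' hb rfl).1.symm)
  have cardL : ∀ n : ℕ, (F (n+1)).card = ∑ w ∈ F n, (LF w).card := by
    intro n
    rw [hL n, Finset.card_biUnion]
    · exact Finset.sum_congr rfl (fun w _ =>
        Finset.card_image_of_injective _ (fun a b h => by simpa using h))
    · intro w1 h1 w2 h2 hne
      simp only [Finset.disjoint_left, Finset.mem_image]
      rintro u ⟨a, _, rfl⟩ ⟨b, _, hb⟩
      exact hne (by injection hb with _ h; exact h.symm)
  have cardE : ∀ n : ℕ, (F (n+2)).card = ∑ w ∈ F n, (EF w).card := by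
    intro n
    rw [hE n, Finset.card_biUnion]
    · refine Finset.sum_congr rfl (fun w _ => Finset.card_image_of_injective _ ?_)
      rintro ⟨a, b⟩ ⟨c, d⟩ h
      simpa [Prod.ext_iff] using h
    · intro w1 h1 w2 h2 hne
      simp only [Finset.disjoint_left, Finset.mem_image]
      rintro u ⟨⟨a, b⟩, _, rfl⟩ ⟨⟨c, d⟩, _, hb⟩
      injection hb with _ h2
      exact hne ((List.append_inj' h2 rfl).1.symm)
  have p0 : (F 0).card = 1 := by
    have h0 : F 0 = {([] : List A)} := by
      ext u
      simp only [hmemF, Finset.mem_singleton, List.length_eq_zero_iff]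
      exact ⟨fun h => h.2, fun h => ⟨h ▸ hnil, h⟩⟩
    rw [h0]; rfl
  have p1 : (F 1).card = k + 1 := by
    have himg : F 1 = (Set.toFinite {a : A | [a] ∈ S}).toFinset.image (fun a => [a]) := by
      ext u
      simp only [hmemF, Finset.mem_image, Set.Finite.mem_toFinset, Set.mem_setOf_eq]
      constructor
      · rintro ⟨hu, hlen⟩
        obtain ⟨a, rfl⟩ := List.length_eq_one_iff.mp hlen
        exact ⟨a, hu, rfl⟩
      · rintro ⟨a, ha, rfl⟩; exact ⟨ha, rfl⟩
    rw [himg, Finset.card_image_of_injective _ (fun a b h => by simpa using h),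
      ← Set.ncard_eq_toFinset_card _ (Set.toFinite _), hk]
  have hrec : ∀ n : ℕ, ((F (n+2)).card : ℤ) = 2 * (F (n+1)).card - (F n).card := by
    intro n
    have hsum : ∑ w ∈ F n, ((EF w).card : ℤ)
        = ∑ w ∈ F n, (((LF w).card : ℤ) + (RF w).card - 1) := by
      refine Finset.sum_congr rfl (fun w hw => ?_)
      have hwS : w ∈ S := ((hmemF n w).mp hw).1
      have hneu := hneutral w hwS
      have e1 : (Eext S w).ncard = (EF w).card := Set.ncard_eq_toFinset_card _ (Set.toFinite _)
      have e2 : (Lext S w).ncard = (LF w).card := Set.ncard_eq_toFinset_card _ (Set.toFinite _)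
      have e3 : (Rext S w).ncard = (RF w).card := Set.ncard_eq_toFinset_card _ (Set.toFinite _)
      rw [e1, e2, e3] at hneu
      exact hneu
    calc ((F (n+2)).card : ℤ) = ∑ w ∈ F n, ((EF w).card : ℤ) := by
          rw [cardE n]; push_cast; ring
      _ = ∑ w ∈ F n, (((LF w).card : ℤ) + (RF w).card - 1) := hsum
      _ = (∑ w ∈ F n, ((LF w).card : ℤ)) + (∑ w ∈ F n, ((RF w).card : ℤ)) - (F n).card := by
          rw [Finset.sum_sub_distrib, Finset.sum_add_distrib]; simp
      _ = 2 * (F (n+1)).card - (F n).card := by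
          rw [← Nat.cast_sum, ← Nat.cast_sum, ← cardL n, ← cardR n]; ring
  have main : ∀ n : ℕ, (F n).card = k * n + 1 := by
    intro n
    induction n using Nat.twoStepInduction with
    | zero => simpa using p0
    | one => simpa using p1
    | more n ih1 ih2 =>
      have h := hrec n
      rw [ih1, ih2] at h
      have hz : ((F (n+2)).card : ℤ) = ((k * (n+2) + 1 : ℕ) : ℤ) := by
        push_cast at h ⊢; rw [h]; ring
      exact_mod_cast hz
  intro n
  rw [Set.ncard_eq_toFinset_card _ (hfin n)]
  exact main n


end Paper
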